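/- arXiv:1504.05172 — 2 statements merged into one kernel-verified Lean document; each statement's English description precedes it below -/
import Mathlib

section
/- For every nontrivial g ∈ H, the asymptotic translation length of g on Y is at least 1/7; precisely, |g^n|_Y ≥ n/7 − 1 for all integers n ≥ 1, and hence liminf_{n→∞} |g^n|_Y / n ≥ 1/7. -/
open FreeGroup Filter

namespace PurelyLox

abbrev F : Type := FreeGroup (Fin 3)

def a : F := FreeGroup.of 0
def b : F := FreeGroup.of 1
def c : F := FreeGroup.of 2

/-- The subgroup generated by `a` and `b`. -/
def H : Subgroup F := Subgroup.closure {a, b}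

/-- `g` is a positive word in the generators `a` and `b`. -/
def PosAB (g : F) : Prop :=
  ∀ x ∈ g.toWord, x.2 = true ∧ x.1 ≠ 2

/-- A word is 7-aperiodic: it contains no subword `u^7` with `u` nonempty. -/
def Aperiodic7 {β : Type*} (w : List β) : Prop :=
  ¬ ∃ u : List β, u ≠ [] ∧ (List.flatten (List.replicate 7 u)) <:+: w

/-- The data of the fixed sequence `(v n)` of positive 7-aperiodic words in `a,b`,
with pairwise distinct lengths tending to infinity. -/
structure VSeq where
  v : ℕ → F
  pos : ∀ n, PosAB (v n)
  len_ne : ∀ m n, m ≠ n → ((v m).toWord.length ≠ (v n).toWord.length)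
  len_tendsto : Tendsto (fun n => (v n).toWord.length) atTop atTop
  aperiodic : ∀ n, Aperiodic7 (v n).toWord

/-- `w n = v n * c`. -/
def VSeq.w (V : VSeq) (n : ℕ) : F := V.v n * c

/-- `z` is a `W`-word: nontrivial, and its reduced word is a subword of
the reduced word of `(w n)^m` for some `n` and some `m ≠ 0`. -/
def VSeq.IsW (V : VSeq) (z : F) : Prop :=
  z ≠ 1 ∧ ∃ (n : ℕ) (m : ℤ), m ≠ 0 ∧ z.toWord <:+: ((V.w n) ^ m).toWord

/-- `|g|_Y`: the least `k` such that `g` is a product of `k` `W`-words. -/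
noncomputable def VSeq.normY (V : VSeq) (g : F) : ℕ :=
  sInf {k | ∃ l : List F, l.length = k ∧ (∀ z ∈ l, V.IsW z) ∧ l.prod = g}

/-- The vertex distance in the graph `Y`. -/
noncomputable def VSeq.dY (V : VSeq) (x y : F) : ℕ := V.normY (x⁻¹ * y)

/-- The product `u * v` is without cancellation. -/
def NoCancel (u v : F) : Prop := (u * v).toWord = u.toWord ++ v.toWord

/-- `p 0, p 1, …, p k` is a `d_Y`-geodesic from `x` to `y`. -/
def VSeq.IsGeodesic (V : VSeq) (x y : F) (k : ℕ) (p : ℕ → F) : Prop :=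
  p 0 = x ∧ p k = y ∧ (∀ i < k, V.dY (p i) (p (i + 1)) = 1) ∧ k = V.dY x y

/-- `g` is cyclically reduced. -/
def CyclicallyReduced (g : F) : Prop := (g * g).toWord = g.toWord ++ g.toWord

/-- `g` is root-free. -/
def RootFree (g : F) : Prop := ∀ (x : F) (s : ℤ), 2 ≤ |s| → g ≠ x ^ s



open List


def Reduced (w : List (Fin 3 × Bool)) : Prop :=
  List.Chain' (fun x y => ¬(x.1 = y.1 ∧ x.2 = !y.2)) w

lemma reduce_eq_self_of_reduced : ∀ {w : List (Fin 3 × Bool)}, Reduced w → FreeGroup.reduce w = w := by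
  intro w
  induction w with
  | nil => intro _; rfl
  | cons x t ih =>
    intro h
    have ht : Reduced t := h.tail
    rw [FreeGroup.reduce.cons, ih ht]
    cases t with
    | nil => rfl
    | cons y s =>
      have hxy : ¬(x.1 = y.1 ∧ x.2 = !y.2) := (List.isChain_cons_cons.mp h).1
      simp [hxy]

lemma exists_of_not_chain' {α : Type*} {R : α → α → Prop} :
    ∀ (l : List α), ¬ List.Chain' R l → ∃ l₁ x y l₂, l = l₁ ++ x :: y :: l₂ ∧ ¬ R x y := by
  intro l
  induction l with
  | nil => intro h; exact absurd List.isChain_nil h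
  | cons a t ih =>
    intro h
    cases t with
    | nil => exact absurd (List.isChain_singleton a) h
    | cons b s =>
      rw [List.Chain', List.isChain_cons_cons] at h
      by_cases hab : R a b
      · have hs : ¬ List.Chain' R (b :: s) := fun hc => h ⟨hab, hc⟩
        obtain ⟨l₁, x, y, l₂, he, hr⟩ := ih hs
        exact ⟨a :: l₁, x, y, l₂, by rw [he]; rfl, hr⟩
      · exact ⟨[], a, b, s, rfl, hab⟩

lemma reduced_reduce (L : List (Fin 3 × Bool)) : Reduced (FreeGroup.reduce L) := by
  by_contra h
  obtain ⟨l₁, x, y, l₂, he, hr⟩ := exists_of_not_chain' _ h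
  rw [not_not] at hr
  obtain ⟨h1, h2⟩ := hr
  have hy : y = (x.1, !x.2) := by
    have : y.2 = !x.2 := by rw [h2, Bool.not_not]
    exact Prod.ext h1.symm this
  rw [hy] at he
  exact FreeGroup.reduce.not (x := x.1) (b := x.2) (by simpa using he)

lemma reduced_toWord (g : F) : Reduced g.toWord := by
  rw [← FreeGroup.reduce_toWord]; exact reduced_reduce _

/-- key splitting lemma for reduce of a concatenation of two reduced words -/
lemma reduce_append : ∀ (N : ℕ) (L1 L2 : List (Fin 3 × Bool)), L1.length ≤ N →
    Reduced L1 → Reduced L2 →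
    ∃ s t, s <+: L1 ∧ t <:+ L2 ∧ FreeGroup.reduce (L1 ++ L2) = s ++ t := by
  intro N
  induction N with
  | zero =>
    intro L1 L2 hlen h1 h2
    have : L1 = [] := List.eq_nil_of_length_eq_zero (Nat.le_zero.mp hlen)
    subst this
    exact ⟨[], L2, List.nil_prefix, List.suffix_refl _, by
      simpa using reduce_eq_self_of_reduced h2⟩
  | succ N ih =>
    intro L1 L2 hlen h1 h2
    rcases List.eq_nil_or_concat L1 with rfl | ⟨L1', x, rfl⟩
    · exact ⟨[], L2, List.nil_prefix, List.suffix_refl _, by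
        simpa using reduce_eq_self_of_reduced h2⟩
    cases L2 with
    | nil =>
      exact ⟨L1'.concat x, [], List.prefix_refl _, List.suffix_refl _, by
        simpa using reduce_eq_self_of_reduced h1⟩
    | cons y L2' =>
      by_cases hc : x.1 = y.1 ∧ x.2 = !y.2
      · -- cancellation
        have hy : y = (x.1, !x.2) := by
          have : y.2 = !x.2 := by rw [hc.2, Bool.not_not]
          exact Prod.ext hc.1.symm this
        have hstep : FreeGroup.Red.Step (L1'.concat x ++ y :: L2') (L1' ++ L2') := by
          rw [hy]
          have : L1'.concat x ++ (x.1, !x.2) :: L2'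
              = L1' ++ (x.1, x.2) :: (x.1, !x.2) :: L2' := by
            simp [List.concat_eq_append]
          rw [this]
          exact FreeGroup.Red.Step.not
        have hred : FreeGroup.reduce (L1'.concat x ++ y :: L2')
            = FreeGroup.reduce (L1' ++ L2') := FreeGroup.reduce.Step.eq hstep
        have h1' : Reduced L1' := h1.prefix (by simp [List.concat_eq_append])
        have h2' : Reduced L2' := h2.tail
        have hlen' : L1'.length ≤ N := by
          have := hlen; simp [List.concat_eq_append] at this; omega
        obtain ⟨s, t, hs, ht, heq⟩ := ih L1' L2' hlen' h1' h2'
        exact ⟨s, t, hs.trans (by simp [List.concat_eq_append]),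
          ht.trans (List.suffix_cons _ _), by rw [hred, heq]⟩
      · -- no cancellation: the whole thing is reduced
        have hred : Reduced (L1'.concat x ++ y :: L2') := by
          unfold Reduced
          rw [List.Chain', List.isChain_append]
          refine ⟨h1, h2, ?_⟩
          intro p hp q hq
          simp [List.concat_eq_append] at hp
          simp at hq
          exact hp ▸ hq ▸ hc
        exact ⟨L1'.concat x, y :: L2', List.prefix_refl _, List.suffix_refl _,
          reduce_eq_self_of_reduced hred⟩

lemma split_mul (u v : F) : ∃ s t, s <+: u.toWord ∧ t <:+ v.toWord ∧
    (u * v).toWord = s ++ t := by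
  obtain ⟨s, t, hs, ht, heq⟩ := reduce_append u.toWord.length u.toWord v.toWord le_rfl
    (reduced_toWord u) (reduced_toWord v)
  refine ⟨s, t, hs, ht, ?_⟩
  calc (u * v).toWord = (FreeGroup.mk u.toWord * FreeGroup.mk v.toWord).toWord := by
        rw [FreeGroup.mk_toWord, FreeGroup.mk_toWord]
    _ = FreeGroup.reduce (u.toWord ++ v.toWord) := by rw [FreeGroup.mul_mk, FreeGroup.toWord_mk]
    _ = s ++ t := heq

-- flatten decomposition machinery
section Flatten
variable {β : Type*}

lemma forall₂_comp {α' β' γ' : Type*} {R : α' → β' → Prop} {S : β' → γ' → Prop}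
    {T : α' → γ' → Prop} (h : ∀ a b c, R a b → S b c → T a c) :
    ∀ {as : List α'} {bs : List β'} {cs : List γ'},
      List.Forall₂ R as bs → List.Forall₂ S bs cs → List.Forall₂ T as cs := by
  intro as bs cs h1
  induction h1 generalizing cs with
  | nil => intro h2; cases h2; exact List.Forall₂.nil
  | cons hab _ ih =>
    intro h2
    cases h2 with
    | cons hbc h2' => exact List.Forall₂.cons (h _ _ _ hab hbc) (ih h2')

lemma forall₂_nil_infix (qs : List (List β)) :
    List.Forall₂ (· <:+: ·) (qs.map fun _ => ([] : List β)) qs := by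
  induction qs with
  | nil => exact List.Forall₂.nil
  | cons q qs ih => exact List.Forall₂.cons ((List.nil_infix (l := q))) ih

lemma forall₂_refl_infix (qs : List (List β)) :
    List.Forall₂ (· <:+: ·) qs qs := by
  induction qs with
  | nil => exact List.Forall₂.nil
  | cons q qs ih => exact List.Forall₂.cons (List.infix_refl q) ih

lemma suffix_append_cases {t A B : List β} (h : t <:+ A ++ B) :
    t <:+ B ∨ ∃ t₁, t₁ <:+ A ∧ t = t₁ ++ B := by
  obtain ⟨u, hu⟩ := h
  rcases List.append_eq_append_iff.mp hu with ⟨a', ha1, ha2⟩ | ⟨c', hc1, hc2⟩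
  · exact Or.inr ⟨a', ⟨u, ha1.symm⟩, ha2⟩
  · exact Or.inl ⟨c', hc2.symm⟩

lemma prefix_append_cases {t A B : List β} (h : t <+: A ++ B) :
    t <+: A ∨ ∃ t₂, t₂ <+: B ∧ t = A ++ t₂ := by
  obtain ⟨u, hu⟩ := h
  rcases List.append_eq_append_iff.mp hu.symm with ⟨a', ha1, ha2⟩ | ⟨c', hc1, hc2⟩
  · exact Or.inr ⟨a', ⟨u, ha2.symm⟩, ha1⟩
  · exact Or.inl ⟨c', hc1.symm⟩

lemma suffix_flatten : ∀ (qs : List (List β)) (t : List β), t <:+ qs.flatten →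
    ∃ rs, List.Forall₂ (· <:+: ·) rs qs ∧ t = rs.flatten := by
  intro qs
  induction qs with
  | nil =>
    intro t ht
    simp at ht
    exact ⟨[], List.Forall₂.nil, by simp [ht]⟩
  | cons q qs ih =>
    intro t ht
    rw [List.flatten_cons] at ht
    rcases suffix_append_cases ht with h | ⟨t₁, ht₁, rfl⟩
    · obtain ⟨rs, h1, h2⟩ := ih t h
      exact ⟨[] :: rs, List.Forall₂.cons ((List.nil_infix (l := q))) h1, by simp [h2]⟩
    · exact ⟨t₁ :: qs, List.Forall₂.cons ht₁.isInfix (forall₂_refl_infix qs), by simp⟩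

lemma prefix_flatten : ∀ (qs : List (List β)) (t : List β), t <+: qs.flatten →
    ∃ rs, List.Forall₂ (· <:+: ·) rs qs ∧ t = rs.flatten := by
  intro qs
  induction qs with
  | nil =>
    intro t ht
    simp at ht
    exact ⟨[], List.Forall₂.nil, by simp [ht]⟩
  | cons q qs ih =>
    intro t ht
    rw [List.flatten_cons] at ht
    rcases prefix_append_cases ht with h | ⟨t₂, ht₂, rfl⟩
    · exact ⟨t :: qs.map (fun _ => []), List.Forall₂.cons h.isInfix (forall₂_nil_infix qs),
        by simp⟩
    · obtain ⟨rs, h1, h2⟩ := ih t₂ ht₂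
      exact ⟨q :: rs, List.Forall₂.cons (List.infix_refl q) h1, by simp [h2]⟩

lemma infix_flatten (qs : List (List β)) (t : List β) (h : t <:+: qs.flatten) :
    ∃ rs, List.Forall₂ (· <:+: ·) rs qs ∧ t = rs.flatten := by
  obtain ⟨m, hm1, hm2⟩ := List.infix_iff_prefix_suffix.mp h
  obtain ⟨rs, h1, rfl⟩ := suffix_flatten qs m hm2
  obtain ⟨ss, h2, rfl⟩ := prefix_flatten rs t hm1
  exact ⟨ss, forall₂_comp (fun a b c h1 h2 => h1.trans h2) h2 h1, rfl⟩

lemma mem_flatten_infix {rs : List (List β)} {r : List β} (h : r ∈ rs) :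
    r <:+: rs.flatten := by
  obtain ⟨s, t, rfl⟩ := List.append_of_mem h
  exact ⟨s.flatten, t.flatten, by simp⟩

end Flatten

/-- decomposition of the reduced word of a product of a list -/
lemma prod_toWord_flatten : ∀ (l : List F), ∃ qs : List (List (Fin 3 × Bool)),
    List.Forall₂ (fun q (z : F) => q <:+: z.toWord) qs l ∧ (l.prod).toWord = qs.flatten := by
  intro l
  induction l with
  | nil => exact ⟨[], List.Forall₂.nil, by simp [FreeGroup.toWord_one]⟩
  | cons z l ih =>
    obtain ⟨qs, h1, h2⟩ := ih
    obtain ⟨s, t, hs, ht, heq⟩ := split_mul z l.prod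
    rw [h2] at ht
    obtain ⟨rs, hr1, rfl⟩ := suffix_flatten qs t ht
    refine ⟨s :: rs, List.Forall₂.cons hs.isInfix ?_, by simpa using heq⟩
    exact forall₂_comp (fun a b c hab hbc => hab.trans hbc) hr1 h1

-- ## invRev facts
lemma invRev_append (A B : List (Fin 3 × Bool)) :
    FreeGroup.invRev (A ++ B) = FreeGroup.invRev B ++ FreeGroup.invRev A := by
  simp [FreeGroup.invRev]

lemma invRev_flatten_replicate (n : ℕ) (A : List (Fin 3 × Bool)) :
    FreeGroup.invRev (List.replicate n A).flatten
      = (List.replicate n (FreeGroup.invRev A)).flatten := by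
  induction n with
  | zero => simp [FreeGroup.invRev]
  | succ n ih =>
    rw [List.replicate_succ, List.flatten_cons, invRev_append, ih,
      List.replicate_succ' (n := n), List.flatten_append]
    simp

lemma mem_invRev {x : Fin 3 × Bool} {A : List (Fin 3 × Bool)} :
    x ∈ FreeGroup.invRev A ↔ (x.1, !x.2) ∈ A := by
  simp only [FreeGroup.invRev, List.mem_reverse, List.mem_map]
  constructor
  · rintro ⟨y, hy, rfl⟩; simpa [Bool.not_not] using hy
  · intro h; exact ⟨(x.1, !x.2), h, by simp [Bool.not_not]⟩

lemma infix_invRev {A B : List (Fin 3 × Bool)} (h : A <:+: B) :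
    FreeGroup.invRev A <:+: FreeGroup.invRev B := by
  obtain ⟨u, v, rfl⟩ := h
  rw [invRev_append, invRev_append]
  exact ⟨FreeGroup.invRev v, FreeGroup.invRev u, by simp [List.append_assoc]⟩

lemma invRev_ne_nil {A : List (Fin 3 × Bool)} (h : A ≠ []) : FreeGroup.invRev A ≠ [] := by
  intro hc
  apply h
  have := congrArg List.length hc
  rw [FreeGroup.invRev_length] at this
  exact List.eq_nil_of_length_eq_zero this

-- ## letters of elements of H
lemma letters_mul {u v : F} {x : Fin 3 × Bool} (h : x ∈ (u * v).toWord) :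
    x ∈ u.toWord ∨ x ∈ v.toWord := by
  have := (FreeGroup.toWord_mul_sublist u v).subset h
  simpa using this

lemma H_letters {g : F} (hg : g ∈ H) : ∀ x ∈ g.toWord, x.1 ≠ 2 := by
  induction hg using Subgroup.closure_induction with
  | mem z hz =>
    rcases hz with rfl | rfl
    · intro x hx
      simp [a, FreeGroup.toWord_of] at hx
      rw [hx]
      decide
    · intro x hx
      simp [b, FreeGroup.toWord_of] at hx
      rw [hx]
      decide
  | one => intro x hx; simp [FreeGroup.toWord_one] at hx
  | mul u v hu hv ihu ihv =>
    intro x hx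
    rcases letters_mul hx with h | h
    · exact ihu x h
    · exact ihv x h
  | inv u hu ihu =>
    intro x hx
    rw [FreeGroup.toWord_inv] at hx
    exact ihu (x.1, !x.2) (mem_invRev.mp hx)

-- ## positive words and powers of w n
lemma reduced_of_positive {A : List (Fin 3 × Bool)} (h : ∀ x ∈ A, x.2 = true) :
    Reduced A := by
  induction A with
  | nil => exact List.isChain_nil
  | cons x t ih =>
    cases t with
    | nil => exact List.isChain_singleton x
    | cons y s =>
      refine List.isChain_cons_cons.mpr ⟨?_, ih (fun z hz => h z (List.mem_cons_of_mem _ hz))⟩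
      intro ⟨_, h2⟩
      have hx := h x (by simp)
      have hy := h y (by simp)
      rw [hx, hy] at h2
      simp at h2

lemma pow_mk_flatten (A : List (Fin 3 × Bool)) (n : ℕ) :
    (FreeGroup.mk A) ^ n = FreeGroup.mk (List.replicate n A).flatten := by
  induction n with
  | zero => simp [FreeGroup.one_eq_mk]  -- may need adjusting
  | succ n ih =>
    rw [pow_succ', ih, FreeGroup.mul_mk, List.replicate_succ, List.flatten_cons]

lemma w_pow_toWord (V : VSeq) (m : ℕ) (k : ℕ) :
    ((V.w m) ^ k).toWord = (List.replicate k ((V.v m).toWord ++ [((2 : Fin 3), true)])).flatten := by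
  have hA : ∀ x ∈ (V.v m).toWord ++ [((2 : Fin 3), true)], x.2 = true := by
    intro x hx
    rcases List.mem_append.mp hx with h | h
    · exact (V.pos m x h).1
    · simp at h; rw [h]
  have hw : V.w m = FreeGroup.mk ((V.v m).toWord ++ [((2 : Fin 3), true)]) := by
    rw [VSeq.w]
    conv_lhs => rw [← FreeGroup.mk_toWord (x := V.v m), ← FreeGroup.mk_toWord (x := c)]
    simp only [FreeGroup.mul_mk, c, FreeGroup.toWord_of]
  rw [hw, pow_mk_flatten, FreeGroup.toWord_mk]
  apply reduce_eq_self_of_reduced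
  apply reduced_of_positive
  intro x hx
  rw [List.mem_flatten] at hx
  obtain ⟨l, hl, hx⟩ := hx
  rw [List.eq_of_mem_replicate hl] at hx
  exact hA x hx

-- ## infix avoiding a letter
lemma infix_sandwich {β : Type*} {P X Y : List β} {e : β} (h : P <:+: X ++ e :: Y)
    (he : e ∉ P) : P <:+: X ∨ P <:+: Y := by
  obtain ⟨u, v, huv⟩ := h
  rcases List.append_eq_append_iff.mp (by simpa [List.append_assoc] using huv :
      u ++ (P ++ v) = X ++ e :: Y) with ⟨a, ha1, ha2⟩ | ⟨c', hc1, hc2⟩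
  · rcases List.append_eq_append_iff.mp ha2 with ⟨b, hb1, hb2⟩ | ⟨d, hd1, hd2⟩
    · left; exact ⟨u, b, by rw [ha1, hb1, List.append_assoc]⟩
    · cases d with
      | nil => left; exact ⟨u, [], by simp at hd1 ⊢; rw [ha1, hd1]⟩
      | cons z d' =>
        have hze : e = z := by
          simp only [List.cons_append] at hd2; injection hd2
        exfalso
        apply he
        rw [hd1, ← hze]
        exact List.mem_append.mpr (Or.inr (by simp))
  · cases c' with
    | nil =>
      simp at hc2
      cases P with
      | nil => left; exact List.nil_infix
      | cons p P' =>
        exfalso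
        apply he
        have : p = e := by
          have := hc2
          simp at this
          exact this.1.symm
        simp [this]
    | cons z c'' =>
      simp only [List.cons_append] at hc2
      injection hc2 with h1 h2
      right
      exact ⟨c'', v, by rw [h2, List.append_assoc]⟩

lemma infix_of_flatten_avoid {P A : List (Fin 3 × Bool)} {e : Fin 3 × Bool} :
    ∀ (n : ℕ), P <:+: (List.replicate n (A ++ [e])).flatten → e ∉ P → P <:+: A := by
  intro n
  induction n with
  | zero => intro h _; simp at h; simp [h]
  | succ n ih =>
    intro h he
    rw [List.replicate_succ, List.flatten_cons] at h
    have : A ++ [e] ++ (List.replicate n (A ++ [e])).flatten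
        = A ++ e :: (List.replicate n (A ++ [e])).flatten := by simp
    rw [this] at h
    rcases infix_sandwich h he with h' | h'
    · exact h'
    · exact ih h' he


-- ## aperiodicity transfer
lemma aperiodic7_infix {w P : List (Fin 3 × Bool)} (h : Aperiodic7 w) (hP : P <:+: w) :
    Aperiodic7 P := by
  rintro ⟨u, hu, hinf⟩
  exact h ⟨u, hu, hinf.trans hP⟩

lemma aperiodic7_invRev {w : List (Fin 3 × Bool)} (h : Aperiodic7 w) :
    Aperiodic7 (FreeGroup.invRev w) := by
  rintro ⟨u, hu, hinf⟩
  refine h ⟨FreeGroup.invRev u, invRev_ne_nil hu, ?_⟩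
  have := infix_invRev hinf
  rwa [FreeGroup.invRev_invRev, invRev_flatten_replicate] at this

/-- any infix of the reduced word of a power of `w n` avoiding the letter `c` is aperiodic -/
lemma piece_aperiodic (V : VSeq) {z : F} (hz : V.IsW z) {P : List (Fin 3 × Bool)}
    (hP : P <:+: z.toWord) (hc : ∀ x ∈ P, x.1 ≠ 2) : Aperiodic7 P := by
  obtain ⟨-, n, m, hm, hinf⟩ := hz
  have hP' : P <:+: ((V.w n) ^ m).toWord := hP.trans hinf
  obtain ⟨k, rfl | rfl⟩ := Int.eq_nat_or_neg m
  · rw [zpow_natCast, w_pow_toWord] at hP'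
    have he : ((2 : Fin 3), true) ∉ P := fun hmem => hc _ hmem rfl
    have := infix_of_flatten_avoid k hP' he
    exact aperiodic7_infix (V.aperiodic n) this
  · rw [zpow_neg, zpow_natCast, FreeGroup.toWord_inv, w_pow_toWord] at hP'
    have hP'' : FreeGroup.invRev P <:+: (List.replicate k ((V.v n).toWord
        ++ [((2 : Fin 3), true)])).flatten := by
      have := infix_invRev hP'
      rwa [FreeGroup.invRev_invRev] at this
    have he : ((2 : Fin 3), true) ∉ FreeGroup.invRev P := by
      intro hmem
      have := mem_invRev.mp hmem
      exact hc _ this rfl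
    have h1 := infix_of_flatten_avoid k hP'' he
    have h2 : P <:+: FreeGroup.invRev ((V.v n).toWord) := by
      have := infix_invRev h1
      rwa [FreeGroup.invRev_invRev] at this
    exact aperiodic7_infix (aperiodic7_invRev (V.aperiodic n)) h2

-- ## periodicity: long infixes of Q^n contain 7th powers
lemma length_flatten_replicate {β : Type*} (n : ℕ) (Q : List β) :
    (List.replicate n Q).flatten.length = n * Q.length := by
  induction n with
  | zero => simp
  | succ n ih => rw [List.replicate_succ, List.flatten_cons, List.length_append, ih]; ring

lemma flatten_replicate_add {β : Type*} (m n : ℕ) (Q : List β) :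
    (List.replicate (m + n) Q).flatten
      = (List.replicate m Q).flatten ++ (List.replicate n Q).flatten := by
  rw [List.replicate_add, List.flatten_append]

lemma drop_flatten_rep {β : Type*} (Q : List β) {j : ℕ} (hj : j ≤ Q.length) :
    ∀ m, ((List.replicate (m + 1) Q).flatten).drop j
      = (List.replicate m (Q.drop j ++ Q.take j)).flatten ++ Q.drop j := by
  intro m
  induction m with
  | zero => simp
  | succ m ih =>
    have hsub : j - Q.length = 0 := Nat.sub_eq_zero_of_le hj
    rw [List.replicate_succ, List.flatten_cons, List.drop_append, hsub,
      List.drop_zero]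
    conv_lhs => rw [← List.take_append_drop j ((List.replicate (m + 1) Q).flatten)]
    have htake : ((List.replicate (m + 1) Q).flatten).take j = Q.take j := by
      rw [List.replicate_succ, List.flatten_cons, List.take_append, hsub,
        List.take_zero, List.append_nil]
    rw [htake, ih, List.replicate_succ, List.flatten_cons]
    simp [List.append_assoc]

lemma seven_power {Q : List (Fin 3 × Bool)} (hQ : Q ≠ []) (n : ℕ)
    {P : List (Fin 3 × Bool)} (h : P <:+: (List.replicate n Q).flatten)
    (hlen : 7 * Q.length ≤ P.length) :
    ∃ u, u ≠ [] ∧ (List.replicate 7 u).flatten <:+: P := by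
  set d := Q.length with hd_def
  have hd : 0 < d := List.length_pos_iff.mpr hQ
  obtain ⟨u, v, huv⟩ := h
  set j0 := u.length with hj0
  have hPv : P ++ v = ((List.replicate n Q).flatten).drop j0 := by
    rw [← huv, List.append_assoc, List.drop_left]
  have hlen2 : j0 + (P.length + v.length) = n * d := by
    have := congrArg List.length huv
    simpa [length_flatten_replicate] using this
  set q := j0 / d with hq_def
  set j := j0 % d with hj_def
  have hj : j ≤ d := le_of_lt (Nat.mod_lt _ hd)
  have hqj : q * d + j = j0 := by rw [Nat.mul_comm]; exact Nat.div_add_mod j0 d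
  have hqn : q + 7 ≤ n := by
    have h2 : (q + 7) * d ≤ n * d := by rw [add_mul]; omega
    exact Nat.le_of_mul_le_mul_right h2 hd
  set m := n - q with hm_def
  have hm7 : 7 ≤ m := by omega
  have hn : n = q + m := by omega
  set R := Q.drop j ++ Q.take j with hR_def
  have hR : R.length = d := by
    rw [hR_def]; simp; omega
  -- drop j0 of Q^n equals a prefix-friendly form
  have hdrop : ((List.replicate n Q).flatten).drop j0
      = (List.replicate (m - 1) R).flatten ++ Q.drop j := by
    rw [hn, flatten_replicate_add]
    rw [List.drop_append]
    have hLq : ((List.replicate q Q).flatten).length = q * d := by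
      rw [length_flatten_replicate]
    have h1 : ((List.replicate q Q).flatten).drop j0 = [] := by
      apply List.drop_eq_nil_of_le
      rw [hLq]; omega
    have h2 : j0 - ((List.replicate q Q).flatten).length = j := by
      rw [hLq]; omega
    rw [h1, h2, List.nil_append]
    have : m = (m - 1) + 1 := by omega
    rw [this, drop_flatten_rep Q hj (m - 1)]
    simp [hR_def]
  have hmm : (List.replicate m R).flatten
      = (List.replicate (m - 1) R).flatten ++ R := by
    have : m = (m - 1) + 1 := by omega
    rw [this, List.replicate_succ' (n := m-1) (a := R), List.flatten_append]
    simp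
  -- P is a prefix of R^m
  have hPpre : P <+: (List.replicate m R).flatten := by
    have h1 : P ++ v = (List.replicate (m - 1) R).flatten ++ Q.drop j := by
      rw [hPv, hdrop]
    refine ⟨v ++ Q.take j, ?_⟩
    rw [← List.append_assoc, h1, hmm, List.append_assoc]
  obtain ⟨y, hy⟩ := hPpre
  have hflat : (List.replicate m R).flatten
      = (List.replicate 7 R).flatten ++ (List.replicate (m - 7) R).flatten := by
    have h9 : m = 7 + (m - 7) := by omega
    rw [← flatten_replicate_add, ← h9]
  have hlen7 : ((List.replicate 7 R).flatten).length = 7 * d := by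
    rw [length_flatten_replicate, hR]
  have h7 : (List.replicate 7 R).flatten = P.take (7 * d) := by
    have ht1 : ((List.replicate m R).flatten).take (7 * d) = P.take (7 * d) := by
      rw [← hy, List.take_append]
      have : 7 * d - P.length = 0 := by omega
      rw [this, List.take_zero, List.append_nil]
    rw [← ht1, hflat, ← hlen7, List.take_left]
  refine ⟨R, ?_, ?_⟩
  · intro hc
    rw [hc] at hR
    simp at hR
    omega
  · rw [h7]
    exact (List.take_prefix _ _).isInfix


-- ## head?/getLast? helpers
lemma head?_SFI {β : Type*} (S' Fl I : List β) (hFl : Fl ≠ []) :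
    (S' ++ Fl ++ I).head? = S'.head?.or Fl.head? := by
  obtain ⟨a, ha⟩ := Option.isSome_iff_exists.mp (List.isSome_head?.mpr hFl)
  rw [List.head?_append, List.head?_append, ha]
  cases S' <;> simp

lemma getLast?_SFI {β : Type*} (S' Fl I : List β) (hFl : Fl ≠ []) :
    (S' ++ Fl ++ I).getLast? = I.getLast?.or Fl.getLast? := by
  obtain ⟨a, ha⟩ := Option.isSome_iff_exists.mp (List.getLast?_isSome.mpr hFl)
  rw [List.getLast?_append, List.getLast?_append, ha]
  cases I <;> simp

lemma flatten_rep_ne_nil {β : Type*} {Q : List β} (hQ : Q ≠ []) {n : ℕ} (hn : 1 ≤ n) :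
    (List.replicate n Q).flatten ≠ [] := by
  intro hc
  have h0 := congrArg List.length hc
  rw [length_flatten_replicate] at h0
  simp only [List.length_nil] at h0
  rcases Nat.mul_eq_zero.mp h0 with h | h
  · omega
  · exact hQ (List.eq_nil_of_length_eq_zero h)

lemma head?_flatten_rep {β : Type*} {Q : List β} (hQ : Q ≠ []) {n : ℕ} (hn : 1 ≤ n) :
    ((List.replicate n Q).flatten).head? = Q.head? := by
  obtain ⟨k, rfl⟩ := Nat.exists_eq_add_of_le hn
  rw [Nat.add_comm, List.replicate_succ, List.flatten_cons, List.head?_append]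
  obtain ⟨a, ha⟩ := Option.isSome_iff_exists.mp (List.isSome_head?.mpr hQ)
  rw [ha]; rfl

lemma getLast?_flatten_rep {β : Type*} {Q : List β} (hQ : Q ≠ []) {n : ℕ} (hn : 1 ≤ n) :
    ((List.replicate n Q).flatten).getLast? = Q.getLast? := by
  obtain ⟨k, rfl⟩ := Nat.exists_eq_add_of_le hn
  rw [Nat.add_comm, List.replicate_succ' (n := k) (a := Q), List.flatten_append, List.getLast?_append]
  simp only [List.flatten_cons, List.flatten_nil, List.append_nil]
  obtain ⟨a, ha⟩ := Option.isSome_iff_exists.mp (List.getLast?_isSome.mpr hQ)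
  rw [ha]; rfl

/-- the cyclic structure of powers of a nontrivial element -/
lemma cyclic_structure : ∀ (N : ℕ) (g : F), g.toWord.length ≤ N → g ≠ 1 →
    ∃ S Q : List (Fin 3 × Bool), Q ≠ [] ∧ (∀ x ∈ Q, x ∈ g.toWord) ∧
      ∀ n : ℕ, 1 ≤ n →
        (g ^ n).toWord = S ++ (List.replicate n Q).flatten ++ FreeGroup.invRev S := by
  intro N
  induction N with
  | zero =>
    intro g hlen hg
    exact absurd (FreeGroup.toWord_eq_nil_iff.mp
      (List.eq_nil_of_length_eq_zero (Nat.le_zero.mp hlen))) hg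
  | succ N ih =>
    intro g hlen hg
    have hLne : g.toWord ≠ [] := fun hc => hg (FreeGroup.toWord_eq_nil_iff.mp hc)
    have hLred : Reduced g.toWord := reduced_toWord g
    by_cases hcr : ∀ z ∈ g.toWord.getLast?, ∀ y ∈ g.toWord.head?, ¬(z.1 = y.1 ∧ z.2 = !y.2)
    · -- cyclically reduced case
      refine ⟨[], g.toWord, hLne, fun x hx => hx, ?_⟩
      intro n hn
      have hred : ∀ k : ℕ, Reduced ((List.replicate k g.toWord).flatten) := by
        intro k
        induction k with
        | zero => exact List.isChain_nil
        | succ k ihk =>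
          rw [List.replicate_succ, List.flatten_cons]
          unfold Reduced
          rw [List.Chain', List.isChain_append]
          refine ⟨hLred, ihk, ?_⟩
          intro p hp q hq
          rcases Nat.eq_zero_or_pos k with rfl | hk
          · simp at hq
          · rw [head?_flatten_rep hLne hk] at hq
            exact hcr p hp q hq
      have hpow : g ^ n = FreeGroup.mk ((List.replicate n g.toWord).flatten) := by
        conv_lhs => rw [← FreeGroup.mk_toWord (x := g)]
        exact pow_mk_flatten g.toWord n
      rw [hpow, FreeGroup.toWord_mk, reduce_eq_self_of_reduced (hred n)]
      simp [FreeGroup.invRev]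
    · -- non-cyclically-reduced: peel off a conjugating letter
      push_neg at hcr
      obtain ⟨z, hz, y, hy, hzy⟩ := hcr
      obtain ⟨y0, T, hL0⟩ := List.exists_cons_of_ne_nil hLne
      have hy0 : y0 = y := by
        rw [hL0] at hy
        simp only [List.head?_cons, Option.mem_def, Option.some.injEq] at hy
        first
        | exact hy
        | exact hy.symm
      rcases List.eq_nil_or_concat T with rfl | ⟨M, z0, rfl⟩
      · rw [hL0] at hz
        simp only [List.getLast?_singleton, Option.mem_def, Option.some.injEq] at hz
        have hzz : z = y0 := by
          first
          | exact hz
          | exact hz.symm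
        rw [hzz, hy0] at hzy
        simp at hzy
      · have h1 : g.toWord.getLast? = some z0 := by
          rw [hL0, List.concat_eq_append, ← List.cons_append]
          exact List.getLast?_concat
        have hz0 : z0 = z := by
          rw [h1] at hz
          simp only [Option.mem_def, Option.some.injEq] at hz
          first
          | exact hz
          | exact hz.symm
        have hL : g.toWord = y :: (M ++ [z]) := by
          rw [hL0, hy0, List.concat_eq_append, hz0]
        have hz' : z = (y.1, !y.2) := Prod.ext hzy.1 hzy.2
        -- facts about M
        have hMinf : M <:+: g.toWord := ⟨[y], [z], by rw [hL]; simp⟩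
        have hMred : Reduced M := hLred.infix hMinf
        have hyMz : Reduced (y :: (M ++ [z])) := by rw [← hL]; exact hLred
        have hMne : M ≠ [] := by
          rintro rfl
          simp only [List.nil_append] at hyMz
          have := List.isChain_pair.mp hyMz
          exact this ⟨hz'.symm ▸ rfl, by rw [hz']; simp⟩
        -- junction facts
        have htail : Reduced (M ++ [z]) := List.IsChain.tail hyMz
        have hMz : ∀ p ∈ M.getLast?, ¬(p.1 = z.1 ∧ p.2 = !z.2) := by
          have := (List.isChain_append.mp htail).2.2
          intro p hp
          exact this p hp z (by simp)
        have hyM : ∀ q ∈ M.head?, ¬(y.1 = q.1 ∧ y.2 = !q.2) := by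
          have := (List.isChain_cons.mp hyMz).1
          intro q hq
          apply this
          rw [List.head?_append, hq]
          rfl
        -- the core element
        have hhW : (FreeGroup.mk M).toWord = M := by
          rw [FreeGroup.toWord_mk, reduce_eq_self_of_reduced hMred]
        have hhne : FreeGroup.mk M ≠ 1 := fun hc => hMne (by
          rw [← hhW, hc, FreeGroup.toWord_one])
        have hlenM : M.length ≤ N := by
          have := hlen
          rw [hL] at this
          simp at this
          omega
        obtain ⟨S', Q, hQne, hQmem, hIH⟩ := ih (FreeGroup.mk M) (by rw [hhW]; exact hlenM) hhne
        have hiy : FreeGroup.invRev [y] = [z] := by simp [FreeGroup.invRev, hz']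
        have hconj : g = FreeGroup.mk [y] * FreeGroup.mk M * (FreeGroup.mk [y])⁻¹ := by
          rw [FreeGroup.inv_mk, hiy, FreeGroup.mul_mk, FreeGroup.mul_mk]
          conv_lhs => rw [← FreeGroup.mk_toWord (x := g)]
          rw [hL]
          simp
        -- M in terms of S', Q
        have hM : M = S' ++ Q ++ FreeGroup.invRev S' := by
          have := hIH 1 le_rfl
          rw [pow_one, hhW] at this
          simpa using this
        refine ⟨y :: S', Q, hQne, ?_, ?_⟩
        · intro x hx
          have : x ∈ M := by rw [← hhW]; exact hQmem x hx
          rw [hL]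
          simp [this]
        · intro n hn
          have hWn := hIH n hn
          set Fl := (List.replicate n Q).flatten with hFl_def
          have hFlne : Fl ≠ [] := flatten_rep_ne_nil hQne hn
          have hWne : ((FreeGroup.mk M) ^ n).toWord ≠ [] := by
            rw [hWn]
            intro hc
            exact hFlne (List.append_eq_nil_iff.mp (List.append_eq_nil_iff.mp hc).1).2
          -- head? and getLast? of the power agree with those of M
          have hhead : ((FreeGroup.mk M) ^ n).toWord.head? = M.head? := by
            rw [hWn, head?_SFI _ _ _ hFlne, hFl_def, head?_flatten_rep hQne hn, hM,
              head?_SFI _ _ _ hQne]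
          have hlast : ((FreeGroup.mk M) ^ n).toWord.getLast? = M.getLast? := by
            rw [hWn, getLast?_SFI _ _ _ hFlne, hFl_def, getLast?_flatten_rep hQne hn, hM,
              getLast?_SFI _ _ _ hQne]
          -- the power of g as an explicitly reduced word
          have hpow : g ^ n = FreeGroup.mk ([y] ++ ((FreeGroup.mk M) ^ n).toWord ++ [z]) := by
            rw [hconj, conj_pow, FreeGroup.inv_mk, hiy]
            conv_lhs => rw [← FreeGroup.mk_toWord (x := (FreeGroup.mk M) ^ n)]
            rw [FreeGroup.mul_mk, FreeGroup.mul_mk]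
          have hredw : Reduced ([y] ++ ((FreeGroup.mk M) ^ n).toWord ++ [z]) := by
            rw [List.append_assoc, List.singleton_append]
            refine List.isChain_cons.mpr ⟨?_, ?_⟩
            · intro q hq
              rw [List.head?_append, hhead] at hq
              apply hyM
              obtain ⟨m0, hm0⟩ := Option.isSome_iff_exists.mp (List.isSome_head?.mpr hMne)
              rw [hm0] at hq ⊢
              simpa using hq
            · rw [List.isChain_append]
              refine ⟨reduced_toWord _, List.isChain_singleton z, ?_⟩
              intro p hp q hq
              simp at hq
              rw [hlast] at hp
              subst hq
              exact hMz p hp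
          rw [hpow, FreeGroup.toWord_mk, reduce_eq_self_of_reduced hredw, hWn]
          have hinvy : FreeGroup.invRev (y :: S') = FreeGroup.invRev S' ++ [z] := by
            simp [FreeGroup.invRev, hz']
          rw [hinvy]
          simp [List.append_assoc]


-- ## single letters are W-words
lemma fin3_other : ∀ (u w : Fin 3), u ≠ 2 → w ≠ 2 → w ≠ u → w = (if u = 0 then 1 else 0) := by
  decide

lemma letter_isW (V : VSeq) (x : Fin 3 × Bool) (hx : x.1 ≠ 2) :
    V.IsW (FreeGroup.mk [x]) := by
  obtain ⟨n, hn⟩ := (V.len_tendsto.eventually_ge_atTop 7).exists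
  have hmem : ((x.1, true) : Fin 3 × Bool) ∈ (V.v n).toWord := by
    by_contra hnm
    set o : Fin 3 := if x.1 = 0 then 1 else 0 with ho
    have hall : ∀ y ∈ (V.v n).toWord, y = ((o, true) : Fin 3 × Bool) := by
      intro y hy
      obtain ⟨h2, h1⟩ := V.pos n y hy
      have hne : y.1 ≠ x.1 := by
        intro hc
        apply hnm
        have : y = (x.1, true) := Prod.ext hc h2
        rwa [← this]
      have := fin3_other x.1 y.1 hx h1 hne
      exact Prod.ext this h2
    have hrep := List.eq_replicate_of_mem hall
    apply V.aperiodic n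
    refine ⟨[((o, true) : Fin 3 × Bool)], by simp, ?_⟩
    have h7 : (List.replicate 7 [((o, true) : Fin 3 × Bool)]).flatten
        = List.replicate 7 ((o, true) : Fin 3 × Bool) := by
      induction (7 : ℕ) with
      | zero => simp
      | succ k ihk => rw [List.replicate_succ, List.flatten_cons, ihk, List.replicate_succ]; rfl
    rw [h7, hrep]
    have : List.replicate ((V.v n).toWord.length) ((o, true) : Fin 3 × Bool)
        = List.replicate 7 ((o, true) : Fin 3 × Bool)
          ++ List.replicate ((V.v n).toWord.length - 7) ((o, true) : Fin 3 × Bool) := by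
      rw [← List.replicate_add]
      congr 1
      omega
    rw [this]
    exact (List.prefix_append _ _).isInfix
  -- [(x.1, true)] is an infix of (v n).toWord, which is a prefix of (w n).toWord
  obtain ⟨s, t, hst⟩ := List.append_of_mem hmem
  have hinf1 : [((x.1, true) : Fin 3 × Bool)] <:+: (V.v n).toWord := ⟨s, t, by rw [hst]; simp⟩
  have hwn : (V.w n).toWord = (V.v n).toWord ++ [((2 : Fin 3), true)] := by
    have := w_pow_toWord V n 1
    rw [pow_one] at this
    simpa using this
  have hinf2 : [((x.1, true) : Fin 3 × Bool)] <:+: (V.w n).toWord := by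
    rw [hwn]
    exact hinf1.trans (List.prefix_append _ _).isInfix
  have hxw : (FreeGroup.mk [x]).toWord = [x] := by
    rw [FreeGroup.toWord_mk, FreeGroup.reduce_singleton]
  refine ⟨?_, ?_⟩
  · intro hc
    have := FreeGroup.toWord_eq_nil_iff.mpr hc
    rw [hxw] at this
    simp at this
  · cases hb : x.2 with
    | true =>
      refine ⟨n, 1, one_ne_zero, ?_⟩
      rw [zpow_one, hxw]
      have : x = ((x.1, true) : Fin 3 × Bool) := Prod.ext rfl hb
      rw [this]
      exact hinf2
    | false =>
      refine ⟨n, -1, by norm_num, ?_⟩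
      rw [zpow_neg, zpow_one, FreeGroup.toWord_inv, hxw]
      have hx' : [x] = FreeGroup.invRev [((x.1, true) : Fin 3 × Bool)] := by
        simp [FreeGroup.invRev]
        exact Prod.ext rfl hb
      rw [hx']
      exact infix_invRev hinf2

lemma exists_decomp (V : VSeq) (g : F) (hg : ∀ x ∈ g.toWord, x.1 ≠ 2) :
    ∃ l : List F, l.length = g.toWord.length ∧ (∀ z ∈ l, V.IsW z) ∧ l.prod = g := by
  refine ⟨g.toWord.map (fun x => FreeGroup.mk [x]), by simp, ?_, ?_⟩
  · intro z hz
    simp only [List.mem_map] at hz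
    obtain ⟨x, hxmem, rfl⟩ := hz
    exact letter_isW V x (hg x hxmem)
  · have key : ∀ (w : List (Fin 3 × Bool)),
        (w.map (fun x => FreeGroup.mk [x])).prod = FreeGroup.mk w := by
      intro w
      induction w with
      | nil => simp [FreeGroup.one_eq_mk]
      | cons x t iht =>
        rw [List.map_cons, List.prod_cons, iht, FreeGroup.mul_mk]
        rfl
    rw [key, FreeGroup.mk_toWord]

lemma forall₂_mem_left {α' β' : Type*} {R : α' → β' → Prop} :
    ∀ {as : List α'} {bs : List β'}, List.Forall₂ R as bs → ∀ a ∈ as, ∃ b ∈ bs, R a b := by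
  intro as bs h
  induction h with
  | nil => intro a ha; simp at ha
  | cons hab htl ih =>
    intro a ha
    rcases List.mem_cons.mp ha with rfl | ha'
    · exact ⟨_, by simp, hab⟩
    · obtain ⟨b, hb, hr⟩ := ih a ha'
      exact ⟨b, List.mem_cons_of_mem _ hb, hr⟩


/-- For every nontrivial `g ∈ H`, `|g^n|_Y ≥ n/7 - 1` for all `n ≥ 1`,
and hence the asymptotic translation length of `g` on `Y` is at least `1/7`. -/
theorem stmt3 (V : VSeq) :
    ∀ g : F, g ∈ H → g ≠ 1 →
      (∀ n : ℕ, 1 ≤ n → (n : ℝ) / 7 - 1 ≤ (V.normY (g ^ n) : ℝ)) ∧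
      (1 / 7 : ℝ) ≤ Filter.liminf (fun n : ℕ => (V.normY (g ^ n) : ℝ) / (n : ℝ)) Filter.atTop := by
  intro g hgH hg
  obtain ⟨S, Q, hQne, hQmem, hstr⟩ := cyclic_structure g.toWord.length g le_rfl hg
  have hglet : ∀ x ∈ g.toWord, x.1 ≠ 2 := H_letters hgH
  set d := Q.length with hd_def
  have hd : 0 < d := List.length_pos_iff.mpr hQne
  -- length of (g^n).toWord
  have hlen_pow : ∀ n : ℕ, 1 ≤ n → (g ^ n).toWord.length = S.length + n * d + S.length := by
    intro n hn
    rw [hstr n hn, List.length_append, List.length_append, length_flatten_replicate,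
      FreeGroup.invRev_length, ← hd_def]
  have key : ∀ n : ℕ, 1 ≤ n →
      n ≤ 7 * V.normY (g ^ n) ∧ V.normY (g ^ n) ≤ (g ^ n).toWord.length := by
    intro n hn
    have hgn_let : ∀ x ∈ (g ^ n).toWord, x.1 ≠ 2 := H_letters (pow_mem hgH n)
    obtain ⟨l₀, hl₀len, hl₀W, hl₀prod⟩ := exists_decomp V (g ^ n) hgn_let
    have hne : {k | ∃ l : List F, l.length = k ∧ (∀ z ∈ l, V.IsW z) ∧ l.prod = g ^ n}.Nonempty :=
      ⟨l₀.length, l₀, rfl, hl₀W, hl₀prod⟩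
    have hub : V.normY (g ^ n) ≤ (g ^ n).toWord.length := by
      rw [VSeq.normY, ← hl₀len]
      exact Nat.sInf_le ⟨l₀, rfl, hl₀W, hl₀prod⟩
    refine ⟨?_, hub⟩
    have hmemInf := Nat.sInf_mem hne
    obtain ⟨l, hlen_l, hlW, hlprod⟩ := hmemInf
    obtain ⟨qs, hqs, hflat⟩ := prod_toWord_flatten l
    rw [hlprod] at hflat
    have hC : (List.replicate n Q).flatten <:+: qs.flatten := by
      rw [← hflat, hstr n hn]
      exact ⟨S, FreeGroup.invRev S, rfl⟩
    obtain ⟨rs, hrs, hCflat⟩ := infix_flatten qs _ hC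
    have hcomp : List.Forall₂ (fun r (z : F) => r <:+: z.toWord) rs l :=
      forall₂_comp (fun a b c h1 h2 => h1.trans h2) hrs hqs
    have hshort : ∀ r ∈ rs, r.length ≤ 7 * d - 1 := by
      intro r hr
      have hrC : r <:+: (List.replicate n Q).flatten := by
        rw [hCflat]
        exact mem_flatten_infix hr
      have hrlet : ∀ x ∈ r, x.1 ≠ 2 := by
        intro x hx
        have hxQ : x ∈ (List.replicate n Q).flatten := hrC.sublist.subset hx
        rw [List.mem_flatten] at hxQ
        obtain ⟨l', hl', hx'⟩ := hxQ
        rw [List.eq_of_mem_replicate hl'] at hx'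
        exact hglet x (hQmem x hx')
      obtain ⟨z, hzl, hrz⟩ := forall₂_mem_left hcomp r hr
      have haper : Aperiodic7 r := piece_aperiodic V (hlW z hzl) hrz hrlet
      by_contra hlong
      push_neg at hlong
      have h7 : 7 * d ≤ r.length := by omega
      obtain ⟨u, hu, huinf⟩ := seven_power hQne n hrC h7
      exact haper ⟨u, hu, huinf⟩
    have hsum : n * d = (rs.map List.length).sum := by
      have := congrArg List.length hCflat
      rw [length_flatten_replicate, List.length_flatten] at this
      exact this
    have hbound : (rs.map List.length).sum ≤ rs.length * (7 * d - 1) := by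
      have := List.sum_le_card_nsmul (rs.map List.length) (7 * d - 1) (by
        intro x hx
        rw [List.mem_map] at hx
        obtain ⟨r, hr, rfl⟩ := hx
        exact hshort r hr)
      simpa [smul_eq_mul] using this
    have hlen_rs : rs.length = l.length := hrs.length_eq.trans hqs.length_eq
    have hmain : n * d ≤ (7 * l.length) * d := by
      calc n * d = (rs.map List.length).sum := hsum
        _ ≤ rs.length * (7 * d - 1) := hbound
        _ ≤ l.length * (7 * d) := by
            rw [hlen_rs]
            exact Nat.mul_le_mul_left _ (by omega)
        _ = (7 * l.length) * d := by ring
    have := Nat.le_of_mul_le_mul_right hmain hd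
    rw [hlen_l] at this
    exact this
  constructor
  · intro n hn
    have h := (key n hn).1
    have h' : (n : ℝ) ≤ 7 * (V.normY (g ^ n) : ℝ) := by exact_mod_cast h
    linarith
  · have hup : ∀ᶠ n : ℕ in atTop, (V.normY (g ^ n) : ℝ) / (n : ℝ) ≤ (g.toWord.length : ℝ) := by
      rw [Filter.eventually_atTop]
      refine ⟨1, fun n hn => ?_⟩
      have h1 := (key n hn).2
      have h2 : (g ^ n).toWord.length ≤ n * g.toWord.length := by
        rw [hlen_pow n hn]
        have hg1 : g.toWord.length = S.length + d + S.length := by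
          have := hlen_pow 1 le_rfl
          rw [pow_one] at this
          omega
        rw [hg1]
        have : 1 * (S.length + d + S.length) ≤ n * (S.length + d + S.length) :=
          Nat.mul_le_mul_right _ hn
        nlinarith
      have h3 : V.normY (g ^ n) ≤ n * g.toWord.length := le_trans h1 h2
      have hn' : (0 : ℝ) < (n : ℝ) := by exact_mod_cast hn
      rw [div_le_iff₀ hn']
      calc (V.normY (g ^ n) : ℝ) ≤ (n : ℝ) * (g.toWord.length : ℝ) := by exact_mod_cast h3
        _ = (g.toWord.length : ℝ) * (n : ℝ) := by ring
    have hcob : Filter.IsCoboundedUnder (· ≥ ·) Filter.atTop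
        (fun n : ℕ => (V.normY (g ^ n) : ℝ) / (n : ℝ)) :=
      (Filter.isBoundedUnder_of_eventually_le hup).isCoboundedUnder_ge
    refine Filter.le_liminf_of_le hcob ?_
    rw [Filter.eventually_atTop]
    refine ⟨1, fun n hn => ?_⟩
    have h := (key n hn).1
    have hn' : (0 : ℝ) < (n : ℝ) := by exact_mod_cast hn
    rw [le_div_iff₀ hn']
    have h' : (n : ℝ) ≤ 7 * (V.normY (g ^ n) : ℝ) := by exact_mod_cast h
    linarith

end PurelyLox
end

section
/- The orbit of H in Y is quasiconvex: there exists K ≥ 0 such that for all x, y ∈ H and every d_Y-geodesic p_0 = x, p_1, …, p_k = y from x to y, each p_i satisfies d_Y(p_i, h) ≤ K for some h ∈ H. -/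
open FreeGroup Filter

namespace PurelyLox

section Helpers

open List

variable {α : Type*} [DecidableEq α]


variable {α : Type*} [DecidableEq α]

omit [DecidableEq α] in
theorem invRev_append_s4 (u v : List (α × Bool)) :
    FreeGroup.invRev (u ++ v) = FreeGroup.invRev v ++ FreeGroup.invRev u := by
  simp [FreeGroup.invRev]

theorem reduce_length_le (L : List (α × Bool)) : (reduce L).length ≤ L.length :=
  (Red.sublist reduce.red).length_le

theorem reduce_cons_nil {x : α × Bool} {L : List (α × Bool)} (h : reduce L = []) :
    reduce (x :: L) = [x] := by rw [reduce.cons, h]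

theorem reduce_cons_cons {x y : α × Bool} {L ys : List (α × Bool)}
    (h : reduce L = y :: ys) :
    reduce (x :: L) = if x.1 = y.1 ∧ x.2 = !y.2 then ys else x :: y :: ys := by
  rw [reduce.cons, h]

/-- structure of a reduced cons -/
theorem reduced_cons {x : α × Bool} {u : List (α × Bool)}
    (h : reduce (x :: u) = x :: u) :
    reduce u = u ∧ ∀ y ∈ u.head?, ¬(x.1 = y.1 ∧ x.2 = !y.2) := by
  rcases hr : reduce u with _ | ⟨y, ys⟩
  · rw [reduce_cons_nil hr] at h
    have : u = [] := by simpa using congrArg List.tail h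
    subst this; simp [hr]
  · rw [reduce_cons_cons hr] at h
    by_cases hc : x.1 = y.1 ∧ x.2 = !y.2
    · rw [if_pos hc] at h
      exfalso
      have h1 := reduce_length_le u
      rw [hr] at h1
      have h2 : ys.length = u.length + 1 := by simpa using congrArg List.length h
      simp at h1; omega
    · rw [if_neg hc] at h
      have h2 : u = y :: ys := by have := congrArg List.tail h; simp at this; exact this.symm
      refine ⟨by rw [h2, ← hr], ?_⟩
      intro z hz
      rw [h2] at hz; simp at hz; subst hz; exact hc

/-- The key two-factor cancellation lemma. -/
theorem reduce_append_decomp {u v : List (α × Bool)}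
    (hu : reduce u = u) (hv : reduce v = v) :
    ∃ P S T, u = P ++ S ∧ v = FreeGroup.invRev S ++ T ∧ reduce (u ++ v) = P ++ T := by
  induction u with
  | nil => exact ⟨[], [], v, rfl, by simp [FreeGroup.invRev], by simpa using hv⟩
  | cons x u' ih =>
    obtain ⟨hu', hhead⟩ := reduced_cons hu
    obtain ⟨P', S', T', h1, h2, h3⟩ := ih hu'
    rcases P' with _ | ⟨y, P''⟩
    · -- P' = []
      simp only [List.nil_append] at h3 h1
      subst h1
      rcases T' with _ | ⟨t, T''⟩
      · refine ⟨[x], u', [], rfl, by simpa using h2, ?_⟩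
        rw [List.cons_append, reduce_cons_nil h3]; rfl
      · by_cases hc : x.1 = t.1 ∧ x.2 = !t.2
        · refine ⟨[], x :: u', T'', by simp, ?_, ?_⟩
          · have ht : t = (x.1, !x.2) := by
              have ht2 : t.2 = !x.2 := by rw [hc.2, Bool.not_not]
              exact Prod.ext hc.1.symm ht2
            have hinv : FreeGroup.invRev (x :: u') = FreeGroup.invRev u' ++ [(x.1, !x.2)] := by
              simp [FreeGroup.invRev]
            rw [h2, hinv, List.append_assoc, ht]
            rfl
          · rw [List.cons_append, reduce_cons_cons h3, if_pos hc]; rfl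
        · refine ⟨[x], u', t :: T'', rfl, h2, ?_⟩
          rw [List.cons_append, reduce_cons_cons h3, if_neg hc]; rfl
    · -- P' = y :: P''
      have hu'head : u' = y :: (P'' ++ S') := by rw [h1]; rfl
      have hxy : ¬(x.1 = y.1 ∧ x.2 = !y.2) := by
        apply hhead; rw [hu'head]; rfl
      refine ⟨x :: y :: P'', S', T', by rw [hu'head]; rfl, h2, ?_⟩
      rw [List.cons_append, reduce_cons_cons h3, if_neg hxy]
      rfl

/-- a suffix of a reduced word is reduced -/
theorem reduced_suffix {p q : List (α × Bool)} (h : reduce (p ++ q) = p ++ q) :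
    reduce q = q := by
  induction p with
  | nil => exact h
  | cons x p' ih => exact ih (reduced_cons h).1

omit [DecidableEq α] in
theorem invRev_invRev' (L : List (α × Bool)) : FreeGroup.invRev (FreeGroup.invRev L) = L :=
  FreeGroup.invRev_invRev

/-- a prefix of a reduced word is reduced -/
theorem reduced_prefix {p q : List (α × Bool)} (h : reduce (p ++ q) = p ++ q) :
    reduce p = p := by
  have h1 : reduce (FreeGroup.invRev q ++ FreeGroup.invRev p) = FreeGroup.invRev q ++ FreeGroup.invRev p := by
    rw [← invRev_append_s4, FreeGroup.reduce_invRev, h]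
  have h2 := reduced_suffix h1
  have h3 : FreeGroup.invRev (reduce p) = FreeGroup.invRev p := by
    rw [← FreeGroup.reduce_invRev, h2]
  exact FreeGroup.invRev_injective h3

theorem reduced_infix {t L : List (α × Bool)} (ht : t <:+: L) (h : reduce L = L) :
    reduce t = t := by
  obtain ⟨s, e, rfl⟩ := ht
  exact reduced_prefix (reduced_suffix (by rwa [List.append_assoc] at h))

omit [DecidableEq α] in
theorem invRev_infix {t L : List (α × Bool)} (ht : t <:+: L) :
    FreeGroup.invRev t <:+: FreeGroup.invRev L := by
  obtain ⟨s, e, rfl⟩ := ht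
  rw [invRev_append_s4, invRev_append_s4]
  exact ⟨FreeGroup.invRev e, FreeGroup.invRev s, by rw [List.append_assoc]⟩

/-- prefix of a flatten decomposes -/
theorem prefix_flatten_s4 {β : Type*} {P : List β} :
    ∀ {L : List (List β)}, P <+: L.flatten →
    ∃ L₁ L₂ t', L = L₁ ++ L₂ ∧ P = L₁.flatten ++ t' ∧
      ((L₂ = [] ∧ t' = []) ∨ ∃ t tl, L₂ = t :: tl ∧ t' <+: t) := by
  intro L
  induction L generalizing P with
  | nil =>
    intro h
    rw [List.flatten_nil, List.prefix_nil] at h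
    exact ⟨[], [], [], rfl, by simp [h], Or.inl ⟨rfl, rfl⟩⟩
  | cons t rest ih =>
    intro h
    rw [List.flatten_cons] at h
    rcases List.prefix_or_prefix_of_prefix h (List.prefix_append t rest.flatten) with h1 | h1
    · exact ⟨[], t :: rest, P, rfl, by simp, Or.inr ⟨t, rest, rfl, h1⟩⟩
    · obtain ⟨P', rfl⟩ := h1
      have h2 : P' <+: rest.flatten := (List.prefix_append_right_inj t).mp h
      obtain ⟨L₁, L₂, t', hL, hP, hd⟩ := ih h2
      exact ⟨t :: L₁, L₂, t', by rw [hL]; rfl, by rw [hP]; simp, hd⟩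

/-- suffix of a flatten decomposes -/
theorem suffix_flatten_s4 {β : Type*} {T : List β} :
    ∀ {L : List (List β)}, T <:+ L.flatten →
    ∃ L₁ L₂ s', L = L₁ ++ L₂ ∧ T = s' ++ L₂.flatten ∧
      ((L₁ = [] ∧ s' = []) ∨ (L₁ ≠ [] ∧ ∃ tm ∈ L₁, s' <:+ tm)) := by
  intro L
  induction L generalizing T with
  | nil =>
    intro h
    rw [List.flatten_nil, List.suffix_nil] at h
    exact ⟨[], [], [], rfl, by simp [h], Or.inl ⟨rfl, rfl⟩⟩
  | cons t rest ih =>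
    intro h
    rw [List.flatten_cons] at h
    rcases List.suffix_or_suffix_of_suffix h (List.suffix_append t rest.flatten) with h1 | h1
    · obtain ⟨L₁, L₂, s', hL, hT, hd⟩ := ih h1
      refine ⟨t :: L₁, L₂, s', by rw [hL]; rfl, hT, Or.inr ⟨by simp, ?_⟩⟩
      rcases hd with ⟨_, rfl⟩ | ⟨_, tm, htm, hs⟩
      · exact ⟨t, by simp, List.nil_suffix⟩
      · exact ⟨tm, by simp [htm], hs⟩
    · obtain ⟨s', rfl⟩ := h1
      have h2 : s' <:+ t := by
        obtain ⟨pre, hpre⟩ := h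
        rw [← List.append_assoc] at hpre
        exact ⟨pre, List.append_cancel_right hpre⟩
      exact ⟨[t], rest, s', rfl, rfl, Or.inr ⟨by simp, t, by simp, h2⟩⟩

theorem toWord_mul' (x y : FreeGroup α) :
    (x * y).toWord = reduce (x.toWord ++ y.toWord) := by
  have h : x * y = FreeGroup.mk (x.toWord ++ y.toWord) := by
    rw [← FreeGroup.mul_mk, FreeGroup.mk_toWord, FreeGroup.mk_toWord]
  rw [h, FreeGroup.toWord_mk]

theorem toWord_mul_decomp (x y : FreeGroup α) :
    ∃ P S T, x.toWord = P ++ S ∧ y.toWord = FreeGroup.invRev S ++ T ∧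
      (x * y).toWord = P ++ T := by
  obtain ⟨P, S, T, h1, h2, h3⟩ :=
    reduce_append_decomp (FreeGroup.reduce_toWord x) (FreeGroup.reduce_toWord y)
  exact ⟨P, S, T, h1, h2, by rw [toWord_mul', h3]⟩

theorem mk_toWord_of_infix {t : List (α × Bool)} {x : FreeGroup α}
    (ht : t <:+: x.toWord) : (FreeGroup.mk t).toWord = t := by
  rw [FreeGroup.toWord_mk]
  exact reduced_infix ht (FreeGroup.reduce_toWord x)

/-- product decomposition: the reduced word of a product of a list is a flatten of
pieces, each of which is an infix of the reduced word of one of the factors. -/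
theorem prod_decomp (l : List (FreeGroup α)) :
    ∃ ts : List (List (α × Bool)), ts.length ≤ l.length ∧
      (∀ t ∈ ts, t = [] ∨ ∃ z ∈ l, t <:+: z.toWord) ∧
      l.prod.toWord = ts.flatten := by
  induction l using List.reverseRecOn with
  | nil => exact ⟨[], by simp, by simp, by simp⟩
  | append_singleton l' z ih =>
    obtain ⟨ts', hlen, hmem, hflat⟩ := ih
    obtain ⟨P, S, T, h1, h2, h3⟩ := toWord_mul_decomp l'.prod z
    rw [List.prod_append, List.prod_singleton]
    have hP : P <+: ts'.flatten := ⟨S, by rw [← hflat, ← h1]⟩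
    obtain ⟨L₁, L₂, t', hts, hPflat, hd⟩ := prefix_flatten_s4 hP
    have hT : T <:+: z.toWord := ⟨FreeGroup.invRev S, [], by rw [h2]; simp⟩
    rcases hd with ⟨hL2, ht'⟩ | ⟨t0, tl, hL2, ht'⟩
    · refine ⟨L₁ ++ [T], ?_, ?_, ?_⟩
      · have : L₁.length = ts'.length := by rw [hts, hL2]; simp
        simp only [List.length_append, List.length_singleton, this]
        omega
      · intro t htm
        rcases List.mem_append.mp htm with hmem1 | hmem1
        · rcases hmem (t) (by rw [hts]; exact List.mem_append_left _ hmem1) with h | ⟨z', hz', hinf⟩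
          · exact Or.inl h
          · exact Or.inr ⟨z', List.mem_append_left _ hz', hinf⟩
        · simp at hmem1; subst hmem1
          exact Or.inr ⟨z, by simp, hT⟩
      · rw [h3, hPflat, ht', List.flatten_append]
        simp
    · refine ⟨L₁ ++ [t'] ++ [T], ?_, ?_, ?_⟩
      · have : L₁.length + L₂.length = ts'.length := by rw [hts]; simp
        rw [hL2] at this
        simp only [List.length_append, List.length_singleton]
        simp at this
        omega
      · intro t htm
        simp only [List.append_assoc, List.mem_append, List.mem_singleton] at htm
        rcases htm with hmem1 | hmem1 | hmem1
        · rcases hmem t (by rw [hts]; exact List.mem_append_left _ hmem1) with h | ⟨z', hz', hinf⟩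
          · exact Or.inl h
          · exact Or.inr ⟨z', List.mem_append_left _ hz', hinf⟩
        · subst hmem1
          have ht0 : t0 ∈ ts' := by rw [hts, hL2]; simp
          rcases hmem t0 ht0 with h | ⟨z', hz', hinf⟩
          · subst h; left; exact List.prefix_nil.mp ht'
          · exact Or.inr ⟨z', List.mem_append_left _ hz', ht'.isInfix.trans hinf⟩
        · subst hmem1
          exact Or.inr ⟨z, by simp, hT⟩
      · rw [h3, hPflat]
        simp [List.flatten_append]

/-- The subgroup of elements whose reduced word avoids the letter 2. -/
def cFree : Subgroup F where
  carrier := {g | ∀ p ∈ g.toWord, p.1 ≠ 2}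
  one_mem' := by simp
  mul_mem' := by
    intro x y hx hy p hp
    rcases List.mem_append.mp ((FreeGroup.toWord_mul_sublist x y).subset hp) with h | h
    · exact hx p h
    · exact hy p h
  inv_mem' := by
    intro x hx p hp
    rw [FreeGroup.toWord_inv] at hp
    simp only [FreeGroup.invRev, List.mem_reverse, List.mem_map] at hp
    obtain ⟨q, hq, rfl⟩ := hp
    exact hx q hq

theorem mem_H_cfree {g : F} (hg : g ∈ H) : ∀ p ∈ g.toWord, p.1 ≠ 2 := by
  have hle : H ≤ cFree := by
    rw [H, Subgroup.closure_le]
    intro z hz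
    rcases hz with rfl | rfl
    · intro p hp
      rw [a, FreeGroup.toWord_of] at hp
      simp at hp; subst hp; decide
    · intro p hp
      rw [b, FreeGroup.toWord_of] at hp
      simp at hp; subst hp; decide
  exact hle hg

theorem mk_single_mem_H {q : Fin 3} (hq : q ≠ 2) (bb : Bool) :
    FreeGroup.mk [(q, bb)] ∈ H := by
  have hof : FreeGroup.of q ∈ H := by
    have : q = 0 ∨ q = 1 := by fin_cases q <;> simp_all
    rcases this with rfl | rfl
    · exact Subgroup.subset_closure (by left; rfl)
    · exact Subgroup.subset_closure (by right; rfl)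
  cases bb
  · have : FreeGroup.mk [(q, false)] = (FreeGroup.of q)⁻¹ := by
      rw [FreeGroup.of, FreeGroup.inv_mk]
      rfl
    rw [this]; exact inv_mem hof
  · exact hof

theorem cfree_mem_H {g : F} (hg : ∀ p ∈ g.toWord, p.1 ≠ 2) : g ∈ H := by
  have key : ∀ L : List (Fin 3 × Bool), (∀ p ∈ L, p.1 ≠ 2) → FreeGroup.mk L ∈ H := by
    intro L
    induction L with
    | nil =>
      intro _
      have : (FreeGroup.mk ([] : List (Fin 3 × Bool))) = 1 := by
        rw [FreeGroup.one_eq_mk]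
      rw [this]; exact one_mem H
    | cons q L' ih =>
      intro hL
      have : FreeGroup.mk (q :: L') = FreeGroup.mk [q] * FreeGroup.mk L' := by
        rw [FreeGroup.mul_mk]; rfl
      rw [this]
      exact mul_mem (mk_single_mem_H (hL q (by simp)) q.2) (ih (fun p hp => hL p (by simp [hp])))
  have := key g.toWord (by exact hg)
  rwa [FreeGroup.mk_toWord] at this

theorem isW_of_infix (V : VSeq) {z : F} {t : List (Fin 3 × Bool)} (hz : V.IsW z)
    (ht : t <:+: z.toWord) (hred : (FreeGroup.mk t).toWord = t) (hne : t ≠ []) :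
    V.IsW (FreeGroup.mk t) := by
  obtain ⟨hz1, n, m, hm, hinf⟩ := hz
  refine ⟨?_, n, m, hm, by rw [hred]; exact ht.trans hinf⟩
  intro h
  rw [h, FreeGroup.toWord_one] at hred
  exact hne hred.symm

theorem isW_inv (V : VSeq) {z : F} (hz : V.IsW z) : V.IsW z⁻¹ := by
  obtain ⟨hz1, n, m, hm, hinf⟩ := hz
  refine ⟨by simpa using hz1, n, -m, by simpa using hm, ?_⟩
  rw [FreeGroup.toWord_inv]
  have : (V.w n) ^ (-m) = ((V.w n) ^ m)⁻¹ := by rw [zpow_neg]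
  rw [this, FreeGroup.toWord_inv]
  exact invRev_infix hinf

theorem normY_one (V : VSeq) : V.normY 1 = 0 := by
  apply Nat.sInf_eq_zero.mpr
  left
  exact ⟨[], rfl, by simp, by simp⟩

theorem normY_le_one (V : VSeq) {u : F} (h : u = 1 ∨ V.IsW u) : V.normY u ≤ 1 := by
  rcases h with rfl | h
  · rw [normY_one]; omega
  · exact Nat.sInf_le ⟨[u], rfl, by simpa using h, by simp⟩

/-- counting lemma: if the reduced word of `A` is a flatten of pieces, each empty or
an infix of the reduced word of a W-word, then `normY A` is at most the number of
nonempty pieces. -/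
theorem normY_le_pieces (V : VSeq) (A : F) (ps : List (List (Fin 3 × Bool)))
    (hA : A.toWord = ps.flatten)
    (hW : ∀ t ∈ ps, t = [] ∨ ∃ z : F, V.IsW z ∧ t <:+: z.toWord) :
    V.normY A ≤ (ps.filter (fun t => !t.isEmpty)).length := by
  classical
  set f : List (Fin 3 × Bool) → Option F :=
    fun t => if t = [] then none else some (FreeGroup.mk t) with hf
  have hlen : ∀ qs : List (List (Fin 3 × Bool)),
      (qs.filterMap f).length = (qs.filter (fun t => !t.isEmpty)).length := by
    intro qs
    induction qs with
    | nil => rfl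
    | cons t qs ih =>
      rw [hf] at ih
      by_cases h : t = [] <;>
        simp [hf, List.filterMap_cons, List.filter_cons, h, ih, List.isEmpty_iff]
  have hprod : ∀ qs : List (List (Fin 3 × Bool)),
      (qs.filterMap f).prod = FreeGroup.mk qs.flatten := by
    intro qs
    induction qs with
    | nil => simp [FreeGroup.one_eq_mk]
    | cons t qs ih =>
      rw [hf] at ih
      by_cases h : t = []
      · simp [hf, List.filterMap_cons, h, ih]
      · simp only [hf, List.filterMap_cons, h, ite_false, List.prod_cons, ih,
          List.flatten_cons, FreeGroup.mul_mk]
  rw [← hlen]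
  apply Nat.sInf_le
  refine ⟨ps.filterMap f, rfl, ?_, ?_⟩
  · intro z hz
    rw [List.mem_filterMap] at hz
    obtain ⟨t, ht, hft⟩ := hz
    rw [hf] at hft
    by_cases h : t = []
    · simp [h] at hft
    · simp only [h, ite_false, Option.some.injEq] at hft
      subst hft
      rcases hW t ht with rfl | ⟨z', hz', hinf⟩
      · exact absurd rfl h
      · exact isW_of_infix V hz' hinf
          (mk_toWord_of_infix (by rw [hA]; exact List.infix_of_mem_flatten ht)) h
  · rw [hprod, ← hA, FreeGroup.mk_toWord]

/-- The main combinatorial lemma. -/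
theorem close_to_H (V : VSeq) (l1 l2 : List F)
    (h1 : ∀ z ∈ l1, V.IsW z) (h2 : ∀ z ∈ l2, V.IsW z)
    (hA : ∀ pr ∈ (l1.prod * l2.prod).toWord, pr.1 ≠ 2)
    (hn : l1.length + l2.length ≤ V.normY (l1.prod * l2.prod)) :
    ∃ h ∈ H, V.normY ((l1.prod)⁻¹ * h) ≤ 1 := by
  classical
  set g1 := l1.prod with hg1
  set g2 := l2.prod with hg2
  set A := g1 * g2 with hAdef
  obtain ⟨P, S, T, hu, hv, hred⟩ := toWord_mul_decomp g1 g2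
  obtain ⟨ts1, hts1len, hts1mem, hts1flat⟩ := prod_decomp l1
  obtain ⟨ts2, hts2len, hts2mem, hts2flat⟩ := prod_decomp l2
  have hP : P <+: ts1.flatten := ⟨S, by rw [← hts1flat, ← hu]⟩
  obtain ⟨L₁, L₂, t', hts, hPflat, hd1⟩ := prefix_flatten_s4 hP
  have hT : T <:+ ts2.flatten := ⟨FreeGroup.invRev S, by rw [← hts2flat, ← hv]⟩
  obtain ⟨M₁, M₂, s', hms, hTflat, hd2⟩ := suffix_flatten_s4 hT
  -- pieces of A
  have hAflat : A.toWord = (L₁ ++ ([t'] ++ ([s'] ++ M₂))).flatten := by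
    rw [hred, hPflat, hTflat]
    simp [List.flatten_append]
  have hWpieces : ∀ t ∈ L₁ ++ ([t'] ++ ([s'] ++ M₂)),
      t = [] ∨ ∃ z : F, V.IsW z ∧ t <:+: z.toWord := by
    intro t htm
    simp only [List.mem_append, List.mem_singleton] at htm
    rcases htm with hm | hm | hm | hm
    · rcases hts1mem t (by rw [hts]; exact List.mem_append_left _ hm) with h | ⟨z, hz, hinf⟩
      · exact Or.inl h
      · exact Or.inr ⟨z, h1 z hz, hinf⟩
    · subst hm
      rcases hd1 with ⟨_, rfl⟩ | ⟨t0, tl, hL2, hpre⟩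
      · exact Or.inl rfl
      · have ht0 : t0 ∈ ts1 := by rw [hts, hL2]; simp
        rcases hts1mem t0 ht0 with h | ⟨z, hz, hinf⟩
        · subst h; exact Or.inl (List.prefix_nil.mp hpre)
        · exact Or.inr ⟨z, h1 z hz, hpre.isInfix.trans hinf⟩
    · subst hm
      rcases hd2 with ⟨_, rfl⟩ | ⟨_, tm, htm', hsuf⟩
      · exact Or.inl rfl
      · have htm2 : tm ∈ ts2 := by rw [hms]; exact List.mem_append_left _ htm'
        rcases hts2mem tm htm2 with h | ⟨z, hz, hinf⟩
        · subst h; exact Or.inl (List.suffix_nil.mp hsuf)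
        · exact Or.inr ⟨z, h2 z hz, hsuf.isInfix.trans hinf⟩
    · rcases hts2mem t (by rw [hms]; exact List.mem_append_right _ hm) with h | ⟨z, hz, hinf⟩
      · exact Or.inl h
      · exact Or.inr ⟨z, h2 z hz, hinf⟩
  have hcount := normY_le_pieces V A _ hAflat hWpieces
  -- length bound on the filtered pieces
  have hfle : ∀ qs : List (List (Fin 3 × Bool)),
      (qs.filter (fun t => !t.isEmpty)).length ≤ qs.length :=
    fun qs => List.length_filter_le _ qs
  -- L₂ has at most one element
  have hL2small : L₂.length ≤ 1 := by
    by_contra hbig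
    push_neg at hbig
    have hLlen : L₁.length + L₂.length ≤ l1.length := by
      have : L₁.length + L₂.length = ts1.length := by
        rw [hts]; simp
      omega
    have hMlen : M₁.length + M₂.length ≤ l2.length := by
      have : M₁.length + M₂.length = ts2.length := by
        rw [hms]; simp
      omega
    have hsplit : ((L₁ ++ ([t'] ++ ([s'] ++ M₂))).filter (fun t => !t.isEmpty)).length
        = (L₁.filter (fun t => !t.isEmpty)).length
          + ((([t'] : List (List (Fin 3 × Bool))).filter (fun t => !t.isEmpty)).length
          + ((([s'] : List (List (Fin 3 × Bool))).filter (fun t => !t.isEmpty)).length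
          + (M₂.filter (fun t => !t.isEmpty)).length)) := by
      rw [List.filter_append, List.filter_append, List.filter_append,
        List.length_append, List.length_append, List.length_append]
    rcases hd2 with ⟨hM1nil, rfl⟩ | ⟨hM1ne, _⟩
    · -- s' = [] case
      have hs0 : ((([] : List (Fin 3 × Bool)) :: []).filter (fun t => !t.isEmpty)).length = 0 := by
        simp
      have : V.normY A ≤ L₁.length + (1 + (0 + M₂.length)) := by
        rw [hsplit, hs0] at hcount
        have b1 := hfle L₁
        have b2 := hfle ([t'] : List (List (Fin 3 × Bool)))
        have b3 := hfle M₂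
        simp only [List.length_singleton] at b2
        omega
      omega
    · -- M₁ nonempty case
      have hM1 : 1 ≤ M₁.length := by
        rcases M₁ with _ | _
        · exact absurd rfl hM1ne
        · simp
      have : V.normY A ≤ L₁.length + (1 + (1 + M₂.length)) := by
        rw [hsplit] at hcount
        have b1 := hfle L₁
        have b2 := hfle ([t'] : List (List (Fin 3 × Bool)))
        have b3 := hfle ([s'] : List (List (Fin 3 × Bool)))
        have b4 := hfle M₂
        simp only [List.length_singleton] at b2 b3
        omega
      omega
  -- letters of P avoid 2
  have hPfree : ∀ pr ∈ P, pr.1 ≠ 2 := by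
    intro pr hpr
    exact hA pr (by rw [hred]; exact List.mem_append_left _ hpr)
  rcases L₂ with _ | ⟨t0, tl⟩
  · -- L₂ = []: g1 itself is c-free
    have ht'nil : t' = [] := by
      rcases hd1 with ⟨_, h⟩ | ⟨t0, tl, h, _⟩
      · exact h
      · simp at h
    have hg1P : g1.toWord = P := by
      rw [hts1flat, hts, hPflat, ht'nil]
      simp
    have hg1H : g1 ∈ H := cfree_mem_H (by rw [hg1P]; exact hPfree)
    exact ⟨g1, hg1H, by simp [normY_one]⟩
  · have htl : tl = [] := by
      have h9 : tl.length + 1 ≤ 1 := by simpa using hL2small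
      exact List.length_eq_zero_iff.mp (by omega)
    subst htl
    have ht' : t' <+: t0 := by
      rcases hd1 with ⟨h, _⟩ | ⟨t1, tl1, h, hpre⟩
      · simp at h
      · have : t1 = t0 := by have := congrArg (fun l => l.headI) h; simpa using this.symm
        rw [← this]
        exact hpre
    -- g1 = h * u with h c-free, u a W-word or trivial
    have hg1word : g1.toWord = L₁.flatten ++ t0 := by
      rw [hts1flat, hts]
      simp
    have hflatred : reduce (L₁.flatten ++ t0) = L₁.flatten ++ t0 := by
      rw [← hg1word]; exact FreeGroup.reduce_toWord g1
    set h0 : F := FreeGroup.mk L₁.flatten with hh0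
    set u : F := FreeGroup.mk t0 with hu0
    have hh0word : h0.toWord = L₁.flatten := by
      rw [hh0, FreeGroup.toWord_mk]
      exact reduced_prefix hflatred
    have huword : u.toWord = t0 := by
      rw [hu0, FreeGroup.toWord_mk]
      exact reduced_suffix hflatred
    have hg1hu : g1 = h0 * u := by
      rw [hh0, hu0, FreeGroup.mul_mk, ← hg1word, FreeGroup.mk_toWord]
    have hh0H : h0 ∈ H := by
      apply cfree_mem_H
      rw [hh0word]
      intro pr hpr
      apply hPfree
      rw [hPflat]
      exact List.mem_append_left _ hpr
    refine ⟨h0, hh0H, ?_⟩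
    have : g1⁻¹ * h0 = u⁻¹ := by
      rw [hg1hu]; group
    rw [this]
    apply normY_le_one
    by_cases ht0 : t0 = []
    · left
      rw [inv_eq_one, hu0, ht0, FreeGroup.one_eq_mk]
    · right
      apply isW_inv
      have ht0mem : t0 ∈ ts1 := by rw [hts]; simp
      rcases hts1mem t0 ht0mem with h | ⟨z, hz, hinf⟩
      · exact absurd h ht0
      · exact isW_of_infix V (h1 z hz) hinf huword ht0

theorem telescope (p : ℕ → F) : ∀ (n s : ℕ),
    ((List.range n).map (fun j => (p (s + j))⁻¹ * p (s + j + 1))).prod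
      = (p s)⁻¹ * p (s + n) := by
  intro n
  induction n with
  | zero => intro s; simp
  | succ n ih =>
    intro s
    rw [List.range_succ, List.map_append, List.prod_append, ih]
    simp only [List.map_cons, List.map_nil, List.prod_cons, List.prod_nil, mul_one]
    group

theorem edge_isW (V : VSeq) {u v : F} (h : V.dY u v = 1) : V.IsW (u⁻¹ * v) := by
  have hne : {k | ∃ l : List F, l.length = k ∧ (∀ z ∈ l, V.IsW z) ∧ l.prod = u⁻¹ * v}.Nonempty := by
    by_contra hemp
    rw [Set.not_nonempty_iff_eq_empty] at hemp
    have : V.dY u v = 0 := by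
      rw [VSeq.dY, VSeq.normY, hemp, Nat.sInf_empty]
    omega
  have hmem := Nat.sInf_mem hne
  rw [← VSeq.normY, ← VSeq.dY, h] at hmem
  obtain ⟨l, hlen, hW, hprod⟩ := hmem
  obtain ⟨z, rfl⟩ := List.length_eq_one_iff.mp hlen
  rw [List.prod_singleton] at hprod
  rw [← hprod]
  exact hW z (by simp)

end Helpers

/-- The orbit of `H` in `Y` is quasiconvex. -/
theorem stmt4 (V : VSeq) :
    ∃ K : ℝ, 0 ≤ K ∧
      ∀ x y : F, x ∈ H → y ∈ H →
        ∀ (k : ℕ) (p : ℕ → F), V.IsGeodesic x y k p →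
          ∀ i ≤ k, ∃ h : F, h ∈ H ∧ (V.dY (p i) h : ℝ) ≤ K := by
  refine ⟨1, by norm_num, ?_⟩
  intro x y hx hy k p hgeo i hik
  obtain ⟨hp0, hpk, hedge, hk⟩ := hgeo
  set l1 : List F := (List.range i).map (fun j => (p (0 + j))⁻¹ * p (0 + j + 1)) with hl1
  set l2 : List F := (List.range (k - i)).map (fun j => (p (i + j))⁻¹ * p (i + j + 1)) with hl2
  have hprod1 : l1.prod = (p 0)⁻¹ * p i := by rw [hl1, telescope]; simp
  have hprod2 : l2.prod = (p i)⁻¹ * p k := by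
    rw [hl2, telescope]
    congr 2
    omega
  have hW1 : ∀ z ∈ l1, V.IsW z := by
    intro z hz
    rw [hl1, List.mem_map] at hz
    obtain ⟨j, hj, rfl⟩ := hz
    rw [List.mem_range] at hj
    exact edge_isW V (hedge (0 + j) (by omega))
  have hW2 : ∀ z ∈ l2, V.IsW z := by
    intro z hz
    rw [hl2, List.mem_map] at hz
    obtain ⟨j, hj, rfl⟩ := hz
    rw [List.mem_range] at hj
    exact edge_isW V (hedge (i + j) (by omega))
  have hAeq : l1.prod * l2.prod = x⁻¹ * y := by
    rw [hprod1, hprod2, hp0, hpk]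
    group
  have hAH : x⁻¹ * y ∈ H := mul_mem (inv_mem hx) hy
  have hlen : l1.length + l2.length ≤ V.normY (l1.prod * l2.prod) := by
    rw [hAeq]
    have : V.normY (x⁻¹ * y) = V.dY x y := rfl
    rw [this, ← hk, hl1, hl2]
    simp
    omega
  obtain ⟨h0, hh0H, hh0⟩ := close_to_H V l1 l2 hW1 hW2
    (by rw [hAeq]; exact mem_H_cfree hAH) hlen
  refine ⟨x * h0, mul_mem hx hh0H, ?_⟩
  have heq : (p i)⁻¹ * (x * h0) = (l1.prod)⁻¹ * h0 := by
    rw [hprod1, hp0]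
    group
  have : V.dY (p i) (x * h0) = V.normY ((l1.prod)⁻¹ * h0) := by
    rw [VSeq.dY, heq]
  rw [this]
  exact_mod_cast hh0

end PurelyLox
end
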